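/- Fix a prime p and let S_n ∈ ℤ[X_0,...,X_n;Y_0,...,Y_n] be the universal addition polynomials for p-typical Witt vectors. Then the polynomial S_n(X_0, X_1^p, X_2^{p^2}, ..., X_n^{p^n}; Y_0, Y_1^p, ..., Y_n^{p^n}) is homogeneous of degree p^n in the variables X_0,...,X_n,Y_0,...,Y_n. -/
import Mathlib

open MvPolynomial Finsupp

section Aux

variable {σ τ R : Type*} [CommRing R]

lemma wh_pow {w : σ → ℕ} {φ : MvPolynomial σ R} {m : ℕ}
    (h : φ.IsWeightedHomogeneous w m) (k : ℕ) :
    (φ ^ k).IsWeightedHomogeneous w (k * m) := by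
  induction k with
  | zero => simpa using isWeightedHomogeneous_one R w
  | succ k ih => rw [pow_succ, add_one_mul]; exact ih.mul h

lemma wh_neg {w : σ → ℕ} {φ : MvPolynomial σ R} {m : ℕ}
    (h : φ.IsWeightedHomogeneous w m) : (-φ).IsWeightedHomogeneous w m :=
  fun d hd => h (by rwa [coeff_neg, neg_ne_zero] at hd)

lemma wh_sub {w : σ → ℕ} {φ ψ : MvPolynomial σ R} {m : ℕ}
    (hφ : φ.IsWeightedHomogeneous w m) (hψ : ψ.IsWeightedHomogeneous w m) :
    (φ - ψ).IsWeightedHomogeneous w m := by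
  rw [sub_eq_add_neg]; exact hφ.add (wh_neg hψ)

lemma wh_bind₁ {w : σ → ℕ} {w' : τ → ℕ} {m : ℕ} {φ : MvPolynomial σ R}
    (f : σ → MvPolynomial τ R) (hf : ∀ i, (f i).IsWeightedHomogeneous w' (w i))
    (hφ : φ.IsWeightedHomogeneous w m) :
    (bind₁ f φ).IsWeightedHomogeneous w' m := by
  rw [φ.as_sum, map_sum]
  apply IsWeightedHomogeneous.sum
  intro d hd
  rw [bind₁_monomial]
  have hdm : (Finsupp.weight w) d = m := hφ (MvPolynomial.mem_support_iff.mp hd)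
  have h1 : (∏ i ∈ d.support, f i ^ d i).IsWeightedHomogeneous w'
      (∑ i ∈ d.support, d i * w i) :=
    IsWeightedHomogeneous.prod _ _ _ (fun i _ => wh_pow (hf i) (d i))
  have h2 : (∑ i ∈ d.support, d i * w i) = m := by
    rw [← hdm, Finsupp.weight_apply, Finsupp.sum]
    simp [smul_eq_mul]
  rw [h2] at h1
  simpa using (isWeightedHomogeneous_C w' (coeff d φ)).mul h1

lemma wh_rename {w : σ → ℕ} {w' : τ → ℕ} {m : ℕ} {φ : MvPolynomial σ R}
    (g : σ → τ) (hg : ∀ i, w' (g i) = w i)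
    (hφ : φ.IsWeightedHomogeneous w m) :
    (rename g φ).IsWeightedHomogeneous w' m := by
  intro d hd
  obtain ⟨u, rfl, hu⟩ := coeff_rename_ne_zero g φ d hd
  rw [← hφ hu, Finsupp.weight_apply, Finsupp.weight_apply,
    Finsupp.sum_mapDomain_index (by simp) (by intros; rw [add_smul])]
  exact Finsupp.sum_congr fun i _ => by rw [hg]

end Aux

variable (p : ℕ)

lemma wh_wittPolynomial (R : Type*) [CommRing R] (n : ℕ) :
    (wittPolynomial p R n).IsWeightedHomogeneous (fun k => p ^ k) (p ^ n) := by
  unfold wittPolynomial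
  apply IsWeightedHomogeneous.sum
  intro i hi
  apply isWeightedHomogeneous_monomial
  rw [Finsupp.weight_apply, Finsupp.sum_single_index (by simp), smul_eq_mul,
    ← pow_add, Nat.sub_add_cancel (Nat.lt_succ_iff.mp (Finset.mem_range.mp hi))]

lemma wh_xInTermsOfW (R : Type*) [CommRing R] [Invertible (p : R)] (n : ℕ) :
    (xInTermsOfW p R n).IsWeightedHomogeneous (fun k => p ^ k) (p ^ n) := by
  induction n using Nat.strong_induction_on with
  | _ n ih =>
    rw [xInTermsOfW_eq]
    have h1 : (X n - ∑ i ∈ Finset.range n, C ((p : R) ^ i) * xInTermsOfW p R i ^ p ^ (n - i)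
        : MvPolynomial ℕ R).IsWeightedHomogeneous (fun k => p ^ k) (p ^ n) := by
      apply wh_sub
      · exact isWeightedHomogeneous_X R _ n
      · apply IsWeightedHomogeneous.sum
        intro i hi
        have hi' := Finset.mem_range.mp hi
        have : (p ^ (n - i)) * p ^ i = p ^ n := by
          rw [← pow_add, Nat.sub_add_cancel hi'.le]
        simpa using (isWeightedHomogeneous_C (fun k : ℕ => p ^ k) ((p : R) ^ i)).mul
          (this ▸ wh_pow (ih i hi') (p ^ (n - i)))
    simpa using h1.mul (isWeightedHomogeneous_C (fun k : ℕ => p ^ k) ((⅟(p : R)) ^ n))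

set_option maxHeartbeats 1000000 in
lemma wh_wittStructureRat [hp : Fact p.Prime] (n : ℕ) :
    (wittStructureRat p (X 0 + X 1 : MvPolynomial (Fin 2) ℚ) n).IsWeightedHomogeneous
      (fun v : Fin 2 × ℕ => p ^ v.2) (p ^ n) := by
  unfold wittStructureRat
  apply wh_bind₁ _ _ (wh_xInTermsOfW p ℚ n)
  intro k
  rw [map_add, bind₁_X_right, bind₁_X_right]
  exact (wh_rename (Prod.mk 0) (fun i => rfl) (wh_wittPolynomial p ℚ k)).add
    (wh_rename (Prod.mk 1) (fun i => rfl) (wh_wittPolynomial p ℚ k))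

lemma wh_wittStructureInt [hp : Fact p.Prime] (n : ℕ) :
    (wittStructureInt p (X 0 + X 1 : MvPolynomial (Fin 2) ℤ) n).IsWeightedHomogeneous
      (fun v : Fin 2 × ℕ => p ^ v.2) (p ^ n) := by
  intro d hd
  have hmap : MvPolynomial.map (Int.castRingHom ℚ)
      (wittStructureInt p (X 0 + X 1 : MvPolynomial (Fin 2) ℤ) n) =
      wittStructureRat p (X 0 + X 1 : MvPolynomial (Fin 2) ℚ) n := by
    rw [map_wittStructureInt]
    simp
  apply wh_wittStructureRat p n (d := d)
  rw [← hmap, coeff_map]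
  simpa using hd

open MvPolynomial in
theorem stmt_19 (p : ℕ) [hp : Fact p.Prime] (n : ℕ) :
    (bind₁ (fun v : Fin 2 × ℕ => (X v : MvPolynomial (Fin 2 × ℕ) ℤ) ^ p ^ v.2)
        (wittStructureInt p (X 0 + X 1 : MvPolynomial (Fin 2) ℤ) n)).IsHomogeneous (p ^ n) := by
  have h := wh_bind₁ (w := fun v : Fin 2 × ℕ => p ^ v.2) (w' := fun _ : Fin 2 × ℕ => 1)
    (fun v : Fin 2 × ℕ => (X v : MvPolynomial (Fin 2 × ℕ) ℤ) ^ p ^ v.2)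
    (fun v => by simpa using wh_pow (isWeightedHomogeneous_X ℤ (fun _ : Fin 2 × ℕ => 1) v) (p ^ v.2))
    (wh_wittStructureInt p n)
  exact h
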